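/- Let p > 5 be a prime and let G be a locally finite tree in which every vertex has degree at least 6. Then there exists a nonconstant holomorphic function on G with values in Z/pZ. -/

import Mathlib

open SimpleGraph

/-- Recursion along a parent function with decreasing depth. -/
noncomputable def treeRec {V M : Type*} [DecidableEq V] (r : V) (pa : V → V) (dep : V → ℕ)
    (hdec : ∀ v, v ≠ r → dep (pa v) < dep v)
    (base : M) (step : V → M → M) (v : V) : M :=
  if _h : v = r then base else step v (treeRec r pa dep hdec base step (pa v))
termination_by dep v
decreasing_by exact hdec v _h

theorem treeRec_eq {V M : Type*} [DecidableEq V] (r : V) (pa : V → V) (dep : V → ℕ)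
    (hdec : ∀ v, v ≠ r → dep (pa v) < dep v)
    (base : M) (step : V → M → M) (v : V) :
    treeRec r pa dep hdec base step v =
      if v = r then base else step v (treeRec r pa dep hdec base step (pa v)) := by
  rw [treeRec]
  split <;> rfl

theorem sum_range_getD {M N : Type*} [AddCommMonoid M] [AddCommMonoid N]
    (F : M → N) (hF : F 0 = 0) :
    ∀ (l : List M) (n : ℕ), l.length ≤ n →
      ∑ i ∈ Finset.range n, F (l.getD i 0) = (l.map F).sum := by
  intro l
  induction l with
  | nil => intro n _; simp [hF]
  | cons a l ih =>
    intro n hn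
    obtain ⟨m, rfl⟩ : ∃ m, n = m + 1 := ⟨n - 1, by simp at hn; omega⟩
    rw [Finset.sum_range_succ']
    simp only [List.getD_cons_succ, List.getD_cons_zero, List.map_cons, List.sum_cons]
    rw [ih m (by simpa using hn), add_comm]

theorem sum_finset_label {α M N : Type*} [DecidableEq α] [AddCommMonoid M] [AddCommMonoid N]
    (s : Finset α) (l : List M) (F : M → N) (hF : F 0 = 0) (hl : l.length ≤ s.card) :
    ∑ w ∈ s, F (if hw : w ∈ s then
        l.getD ((Fintype.equivFinOfCardEq (Fintype.card_coe s)) ⟨w, hw⟩ : ℕ) 0 else 0)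
      = (l.map F).sum := by
  rw [← Finset.sum_coe_sort]
  have h1 : ∀ x : ↥s, F (if hw : (x : α) ∈ s then
      l.getD ((Fintype.equivFinOfCardEq (Fintype.card_coe s)) ⟨x, hw⟩ : ℕ) 0 else 0)
      = F (l.getD ((Fintype.equivFinOfCardEq (Fintype.card_coe s)) x : ℕ) 0) := by
    intro x; rw [dif_pos x.2]
  rw [Finset.sum_congr rfl (fun x _ => h1 x)]
  rw [Equiv.sum_comp (Fintype.equivFinOfCardEq (Fintype.card_coe s))
    (fun i : Fin s.card => F (l.getD (i : ℕ) 0))]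
  exact (Fin.sum_univ_eq_sum_range (fun j => F (l.getD j 0)) s.card).trans
    (sum_range_getD F hF l s.card hl)

theorem exists_parent {V : Type*} (G : SimpleGraph V) (htree : G.IsTree) (r : V) :
    ∃ (pa : V → V) (dep : V → ℕ), dep r = 0 ∧
      (∀ v, v ≠ r → G.Adj (pa v) v ∧ dep v = dep (pa v) + 1) ∧
      (∀ u v, G.Adj u v → (v ≠ r ∧ pa v = u) ∨ (u ≠ r ∧ pa u = v)) := by
  classical
  have hEU := htree.existsUnique_path
  obtain ⟨path, hpath⟩ : ∃ path : ∀ v, G.Walk r v, ∀ v, (path v).IsPath :=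
    ⟨fun v => (hEU r v).exists.choose, fun v => (hEU r v).exists.choose_spec⟩
  have hU : ∀ {a b : V} (q q' : G.Walk a b), q.IsPath → q'.IsPath → q = q' :=
    fun q q' hq hq' => (hEU _ _).unique hq hq'
  have hnil : path r = Walk.nil := hU _ _ (hpath r) Walk.IsPath.nil
  have hdecomp : ∀ v, ∃ u : V, v ≠ r →
      ∃ (w : G.Walk r u) (h : G.Adj u v), path v = w.concat h := by
    intro v
    by_cases hv : v = r
    · exact ⟨v, fun h => absurd hv h⟩
    · cases hpv : path v with
      | nil => exact absurd rfl hv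
      | cons hadj q =>
        obtain ⟨u, q', h', heq⟩ := Walk.exists_cons_eq_concat hadj q
        exact ⟨u, fun _ => ⟨q', h', heq⟩⟩
  choose pa hpa using hdecomp
  set dep : V → ℕ := fun v => (path v).length with hdepdef
  have hdep0 : dep r = 0 := by simp [hdepdef, hnil]
  have hkey : ∀ v, v ≠ r → ∃ h : G.Adj (pa v) v, path v = (path (pa v)).concat h := by
    intro v hv
    obtain ⟨q, h, heq⟩ := hpa v hv
    have hq : q.IsPath := by
      have := hpath v
      rw [heq, Walk.concat_eq_append] at this
      exact this.of_append_left
    rw [hU q (path (pa v)) hq (hpath (pa v))] at heq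
    exact ⟨h, heq⟩
  refine ⟨pa, dep, hdep0, ?_, ?_⟩
  · intro v hv
    obtain ⟨h, heq⟩ := hkey v hv
    refine ⟨h, ?_⟩
    simp [hdepdef, heq, Walk.length_concat]
  · intro u v hadj
    by_cases hmem : v ∈ (path u).support
    · right
      set t := (path u).takeUntil v hmem with ht
      set d := (path u).dropUntil v hmem with hd
      have hdP : d.IsPath := (hpath u).dropUntil hmem
      have hsingle : (Walk.cons hadj.symm Walk.nil : G.Walk v u).IsPath := by
        simp [Walk.isPath_def, hadj.ne']
      have hdeq : d = Walk.cons hadj.symm Walk.nil := hU _ _ hdP hsingle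
      have hueq : path u = t.concat hadj.symm := by
        rw [Walk.concat_eq_append]
        rw [← Walk.take_spec (path u) hmem, ← ht, ← hd, hdeq]
      have hur : u ≠ r := by
        rintro rfl
        rw [hnil] at hueq
        exact Walk.concat_ne_nil _ _ hueq.symm
      obtain ⟨h', heq'⟩ := hkey u hur
      rw [hueq] at heq'
      obtain ⟨he, -⟩ := Walk.concat_inj heq'
      exact ⟨hur, he.symm⟩
    · left
      have hP : ((path u).concat hadj).IsPath := by
        rw [Walk.isPath_def, Walk.support_concat,
          List.nodup_append]
        refine ⟨(hpath u).support_nodup, by simp,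
          by intro a ha b hb hab; simp at hb; exact hmem (by rw [← hb, ← hab]; exact ha)⟩
      have hveq : path v = (path u).concat hadj := (hU _ _ hP (hpath v)).symm
      have hvr : v ≠ r := by
        rintro rfl
        rw [hnil] at hveq
        exact Walk.concat_ne_nil _ _ hveq.symm
      obtain ⟨h', heq'⟩ := hkey v hvr
      rw [hveq] at heq'
      obtain ⟨he, -⟩ := Walk.concat_inj heq'
      exact ⟨hvr, he.symm⟩

/-- The Laplacian-based notion of a harmonic function on a locally finite simple graph. -/
def SimpleGraph.IsHarmonic {V R : Type*} [CommRing R] (G : SimpleGraph V)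
    [G.LocallyFinite] (f : V → R) : Prop :=
  ∀ x : V, ∑ y ∈ G.neighborFinset x, (f y - f x) = 0

/-- A function is holomorphic if both it and its square are harmonic. -/
def SimpleGraph.IsHolomorphic {V R : Type*} [CommRing R] (G : SimpleGraph V)
    [G.LocallyFinite] (f : V → R) : Prop :=
  G.IsHarmonic f ∧ G.IsHarmonic (fun x => (f x) ^ 2)

/-- on a locally finite tree in which every vertex has degree at least 6,
there is a nonconstant holomorphic function with values in `ℤ/pℤ` for any prime `p > 5`. -/
theorem exists_nonconstant_zmod_holomorphic_of_tree_min_degree_six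
    {V : Type*} (G : SimpleGraph V) [G.LocallyFinite]
    (htree : G.IsTree) (hdeg : ∀ v : V, 6 ≤ G.degree v)
    (p : ℕ) (hp : p.Prime) (hp5 : 5 < p) :
    ∃ φ : V → ZMod p, G.IsHolomorphic φ ∧ ∃ a b : V, φ a ≠ φ b := by
  classical
  haveI : Fact p.Prime := ⟨hp⟩
  obtain ⟨r⟩ := htree.isConnected.nonempty
  obtain ⟨pa, dep, hdep0, hparent, hdich⟩ := exists_parent G htree r
  have hdec : ∀ v, v ≠ r → dep (pa v) < dep v := fun v hv => by
    have := (hparent v hv).2; omega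
  -- children of a vertex
  set children : V → Finset V :=
    fun u => (G.neighborFinset u).filter (fun w => w ≠ r ∧ pa w = u) with hchil
  have hmem_children : ∀ u w, w ∈ children u ↔ (G.Adj u w ∧ w ≠ r ∧ pa w = u) := by
    intro u w; simp [hchil, SimpleGraph.mem_neighborFinset]
  have hnbr_r : G.neighborFinset r = children r := by
    ext w
    rw [SimpleGraph.mem_neighborFinset, hmem_children]
    constructor
    · intro hadj
      rcases hdich r w hadj with ⟨h1, h2⟩ | ⟨h1, _⟩
      · exact ⟨hadj, h1, h2⟩
      · exact absurd rfl h1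
    · exact fun h => h.1
  have hnr : ∀ u, u ≠ r →
      G.neighborFinset u = insert (pa u) (children u) ∧ pa u ∉ children u := by
    intro u hu
    constructor
    · ext w
      rw [SimpleGraph.mem_neighborFinset, Finset.mem_insert, hmem_children]
      constructor
      · intro hadj
        rcases hdich u w hadj with ⟨h1, h2⟩ | ⟨h1, h2⟩
        · exact Or.inr ⟨hadj, h1, h2⟩
        · exact Or.inl h2.symm
      · rintro (rfl | h)
        · exact ((hparent u hu).1).symm
        · exact h.1
    · intro hcon
      rw [hmem_children] at hcon
      obtain ⟨-, hpar, hpp⟩ := hcon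
      have h1 := (hparent u hu).2
      have h2 := (hparent (pa u) hpar).2
      rw [hpp] at h2
      omega
  have hcard_r : 6 ≤ (children r).card := by
    rw [← hnbr_r]
    rw [SimpleGraph.card_neighborFinset_eq_degree]
    exact hdeg r
  have hcard : ∀ u, u ≠ r → 5 ≤ (children u).card := by
    intro u hu
    have h1 : G.degree u = (children u).card + 1 := by
      rw [← SimpleGraph.card_neighborFinset_eq_degree, (hnr u hu).1,
        Finset.card_insert_of_notMem (hnr u hu).2]
    have := hdeg u
    omega
  -- arithmetic data in ZMod p
  obtain ⟨x1, y1, hxy1⟩ := ZMod.sq_add_sq p (-1)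
  choose sqa sqb hsq using fun δ : ZMod p => ZMod.sq_add_sq p (-δ ^ 2)
  set pat : V → ZMod p → List (ZMod p) := fun u δ =>
    if u = r then [x1, -x1, y1, -y1, 1, -1] else [sqa δ, -sqa δ, sqb δ, -sqb δ, δ] with hpat
  have hpatlen : ∀ u δ, (pat u δ).length ≤ (children u).card := by
    intro u δ
    by_cases hu : u = r
    · subst hu; simpa [hpat] using hcard_r
    · simp only [hpat, if_neg hu]
      simpa using hcard u hu
  set lab : V → ZMod p → V → ZMod p := fun u δ w =>
    if hw : w ∈ children u then
      (pat u δ).getD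
        ((Fintype.equivFinOfCardEq (Fintype.card_coe (children u))) ⟨w, hw⟩ : ℕ) 0
    else 0 with hlab
  -- the label function g and potential f
  obtain ⟨g, hg0, hgv⟩ : ∃ g : V → ZMod p, g r = 0 ∧
      ∀ v, v ≠ r → g v = lab (pa v) (g (pa v)) v := by
    refine ⟨treeRec r pa dep hdec 0 (fun v m => lab (pa v) m v), ?_, ?_⟩
    · rw [treeRec_eq]; simp
    · intro v hv; rw [treeRec_eq, if_neg hv]
  obtain ⟨f, hf0, hfv⟩ : ∃ f : V → ZMod p, f r = 0 ∧
      ∀ v, v ≠ r → f v = f (pa v) + g v := by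
    refine ⟨treeRec r pa dep hdec 0 (fun v m => m + g v), ?_, ?_⟩
    · rw [treeRec_eq]; simp
    · intro v hv; rw [treeRec_eq, if_neg hv]
  have hgw : ∀ u w, w ∈ children u → g w = lab u (g u) w := by
    intro u w hw
    obtain ⟨-, hwr, hpw⟩ := (hmem_children u w).1 hw
    rw [hgv w hwr, hpw]
  have hfw : ∀ u w, w ∈ children u → f w - f u = g w := by
    intro u w hw
    obtain ⟨-, hwr, hpw⟩ := (hmem_children u w).1 hw
    rw [hfv w hwr, hpw]
    ring
  -- the children sum computation
  have hCS : ∀ (u : V) (F : ZMod p → ZMod p), F 0 = 0 →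
      ∑ w ∈ children u, F (f w - f u) = ((pat u (g u)).map F).sum := by
    intro u F hF
    have h1 : ∀ w ∈ children u, F (f w - f u) = F (lab u (g u) w) := by
      intro w hw; rw [hfw u w hw, hgw u w hw]
    rw [Finset.sum_congr rfl h1]
    simp only [hlab]
    exact sum_finset_label (children u) (pat u (g u)) F hF (hpatlen u (g u))
  -- linear harmonicity
  have hlin : ∀ x : V, ∑ y ∈ G.neighborFinset x, (f y - f x) = 0 := by
    intro x
    by_cases hx : x = r
    · subst hx
      rw [hnbr_r]
      have := hCS x (fun t => t) rfl
      rw [this]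
      simp [hpat]
    · rw [(hnr x hx).1, Finset.sum_insert (hnr x hx).2]
      have hpx : f (pa x) - f x = -(g x) := by rw [hfv x hx]; ring
      have := hCS x (fun t => t) rfl
      rw [hpx, this]
      simp only [hpat, if_neg hx]
      simp [List.sum_cons]
      try ring
  -- squared-difference sums
  have hsq2 : ∀ x : V, ∑ y ∈ G.neighborFinset x, (f y - f x) ^ 2 = 0 := by
    intro x
    by_cases hx : x = r
    · subst hx
      rw [hnbr_r]
      have := hCS x (fun t => t ^ 2) (by simp)
      rw [this]
      simp only [hpat, if_pos rfl]
      simp [List.sum_cons]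
      linear_combination (2 : ZMod p) * hxy1
    · rw [(hnr x hx).1, Finset.sum_insert (hnr x hx).2]
      have hpx : f (pa x) - f x = -(g x) := by rw [hfv x hx]; ring
      have := hCS x (fun t => t ^ 2) (by simp)
      rw [hpx, this]
      simp only [hpat, if_neg hx]
      simp [List.sum_cons]
      linear_combination (2 : ZMod p) * hsq (g x)
  -- square harmonicity
  have hsqh : ∀ x : V, ∑ y ∈ G.neighborFinset x, ((f y) ^ 2 - (f x) ^ 2) = 0 := by
    intro x
    have h1 : ∀ y, (f y) ^ 2 - (f x) ^ 2 = (f y - f x) ^ 2 + 2 * f x * (f y - f x) := by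
      intro y; ring
    rw [Finset.sum_congr rfl (fun y _ => h1 y), Finset.sum_add_distrib, ← Finset.mul_sum,
      hsq2 x, hlin x]
    ring
  -- the distinguished child of the root
  have h4 : 4 < (children r).card := by omega
  set e := Fintype.equivFinOfCardEq (Fintype.card_coe (children r)) with he
  set w0 : V := ((e.symm ⟨4, h4⟩ : ↥(children r)) : V) with hw0def
  have hw0 : w0 ∈ children r := (e.symm ⟨4, h4⟩).2
  have hgw0 : g w0 = 1 := by
    rw [hgw r w0 hw0]
    simp only [hlab, dif_pos hw0]
    have : (⟨w0, hw0⟩ : ↥(children r)) = e.symm ⟨4, h4⟩ := Subtype.ext hw0def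
    rw [this]
    rw [← he, Equiv.apply_symm_apply]
    simp [hpat, hg0]
  have hfw0 : f w0 = 1 := by
    have hw0r : w0 ≠ r := by
      have hadj : G.Adj r w0 := ((hmem_children r w0).1 hw0).1
      exact hadj.ne'
    obtain ⟨-, -, hpw⟩ := (hmem_children r w0).1 hw0
    rw [hfv w0 hw0r, hpw, hf0, hgw0, zero_add]
  refine ⟨f, ⟨hlin, hsqh⟩, w0, r, ?_⟩
  rw [hfw0, hf0]
  exact one_ne_zero
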